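/- If a graph G = (V,E) contains no (k', t)-multicycle for any k' > k, then for every vertex v, letting H be the subgraph induced by all vertices at distance at most t from v, one can remove at most 2k edges incident to v from H so that the connected component of v in the resulting graph is a tree. -/

import Mathlib

open SimpleGraph

/-- `G` has a `(k,t)`-multicycle at `s`: a connected subgraph `G'` containing
`s` with cyclomatic number exactly `k`, together with a spanning shortest-path
tree `T'` of `G'` rooted at `s` of depth at most `t`, all of whose leaves are
incident to a non-tree edge of `G'`. -/
def HasMulticycle {V : Type*} (G : SimpleGraph V) (k t : ℕ) (s : V) : Prop :=
  ∃ (G' T' : G.Subgraph) (hs : s ∈ G'.verts) (hs' : s ∈ T'.verts),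
    T' ≤ G' ∧
    T'.verts = G'.verts ∧
    G'.verts.Finite ∧
    G'.coe.Connected ∧
    T'.coe.IsTree ∧
    -- cyclomatic number of `G'` is exactly `k`
    G'.edgeSet.ncard + 1 = G'.verts.ncard + k ∧
    -- `T'` is a shortest-path tree of depth at most `t`
    (∀ (w : V) (hw : w ∈ G'.verts) (hw' : w ∈ T'.verts),
      T'.coe.dist ⟨s, hs'⟩ ⟨w, hw'⟩ = G'.coe.dist ⟨s, hs⟩ ⟨w, hw⟩ ∧
      T'.coe.dist ⟨s, hs'⟩ ⟨w, hw'⟩ ≤ t) ∧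
    -- every leaf of `T'` is incident to an edge of `G'` not in `T'`
    ∀ w ∈ T'.verts, w ≠ s → (T'.neighborSet w).ncard = 1 →
      ∃ v : V, G'.Adj w v ∧ ¬ T'.Adj w v

/-- The subgraph of `G` induced by all vertices at distance at most `t`
from `v`. -/
def ballGraph {V : Type*} (G : SimpleGraph V) (v : V) (t : ℕ) : SimpleGraph V where
  Adj a b := G.Adj a b ∧
    (G.Reachable v a ∧ G.dist v a ≤ t) ∧ (G.Reachable v b ∧ G.dist v b ≤ t)
  symm := by
    constructor
    intro a b h
    exact ⟨h.1.symm, h.2.2, h.2.1⟩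
  loopless := by
    constructor
    intro a h
    exact G.loopless.irrefl a h.1

namespace MC17

variable {V : Type*}

/-- The ball of radius `t` around `v`. -/
def ball (G : SimpleGraph V) (v : V) (t : ℕ) : Set V :=
  {u | G.Reachable v u ∧ G.dist v u ≤ t}

lemma v_mem_ball (G : SimpleGraph V) (v : V) (t : ℕ) : v ∈ ball G v t :=
  ⟨Reachable.refl v, by rw [SimpleGraph.dist_self]; exact Nat.zero_le t⟩

lemma eq_of_dist_eq_zero {G : SimpleGraph V} {v u : V} (hr : G.Reachable v u)
    (h : G.dist v u = 0) : u = v :=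
  ((hr.dist_eq_zero_iff).mp h).symm

lemma exists_parent (G : SimpleGraph V) {v u : V} (hr : G.Reachable v u) (hne : u ≠ v) :
    ∃ p, G.Adj p u ∧ G.dist v p + 1 = G.dist v u := by
  obtain ⟨q, hq⟩ := hr.exists_walk_length_eq_dist
  have hr' := q.reverse
  cases hr' : q.reverse with
  | nil =>
    exact absurd rfl hne
  | @cons _ c _ hadj q2 =>
    refine ⟨c, hadj.symm, ?_⟩
    have h1 : G.dist v c ≤ q2.length := by
      have := SimpleGraph.dist_le q2.reverse
      simpa using this
    have h2 : G.dist v u ≤ G.dist v c + 1 := by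
      have hrc : G.Reachable v c := hr.trans hadj.reachable
      obtain ⟨w, hw⟩ := hrc.exists_walk_length_eq_dist
      have := SimpleGraph.dist_le (w.concat hadj.symm)
      rwa [Walk.length_concat, hw] at this
    have hlen : q2.length + 1 = G.dist v u := by
      have := congrArg SimpleGraph.Walk.length hr'
      rw [Walk.length_reverse, hq] at this
      simpa [Nat.add_comm] using this.symm
    omega

open Classical in
/-- Parent function on the BFS tree rooted at `v`. -/
noncomputable def par (G : SimpleGraph V) (v : V) : V → V := fun u =>
  if h : G.Reachable v u ∧ u ≠ v then (exists_parent G h.1 h.2).choose else v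

lemma par_spec {G : SimpleGraph V} {v u : V} (hr : G.Reachable v u) (hne : u ≠ v) :
    G.Adj (par G v u) u ∧ G.dist v (par G v u) + 1 = G.dist v u := by
  rw [par, dif_pos ⟨hr, hne⟩]
  exact (exists_parent G hr hne).choose_spec

lemma par_mem_ball {G : SimpleGraph V} {v : V} {t : ℕ} {u : V} (hu : u ∈ ball G v t)
    (hne : u ≠ v) : par G v u ∈ ball G v t := by
  obtain ⟨hr0, hle⟩ := hu
  obtain ⟨hadj, hd⟩ := par_spec hr0 hne
  exact ⟨hr0.trans hadj.symm.reachable, by omega⟩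

/-- Iterating the parent function along the ball. -/
lemma par_iter {G : SimpleGraph V} {v : V} {t : ℕ} {u : V} (hu : u ∈ ball G v t) :
    ∀ j, j ≤ G.dist v u →
      (par G v)^[j] u ∈ ball G v t ∧ G.dist v ((par G v)^[j] u) + j = G.dist v u := by
  intro j
  induction j with
  | zero => exact fun _ => ⟨by simpa using hu, by simp⟩
  | succ n ih =>
    intro hj
    obtain ⟨hb, hd⟩ := ih (by omega)
    have hne : (par G v)^[n] u ≠ v := by
      intro h
      rw [h, SimpleGraph.dist_self] at hd
      omega
    rw [Function.iterate_succ_apply']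
    obtain ⟨hadj, hd'⟩ := par_spec hb.1 hne
    exact ⟨par_mem_ball hb hne, by omega⟩

lemma par_iter_dist_eq_zero {G : SimpleGraph V} {v : V} {t : ℕ} {u : V}
    (hu : u ∈ ball G v t) : (par G v)^[G.dist v u] u = v := by
  obtain ⟨hb, hd⟩ := par_iter hu (G.dist v u) le_rfl
  exact eq_of_dist_eq_zero hb.1 (by omega)

/-- The BFS tree edges. -/
def treeEdges (G : SimpleGraph V) (v : V) (t : ℕ) : Set (Sym2 V) :=
  {e | ∃ u, u ∈ ball G v t ∧ u ≠ v ∧ e = s(par G v u, u)}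


lemma exists_last_edge {G : SimpleGraph V} {a b : V} (r : G.Walk a b) (hr : r.edges ≠ []) :
    ∃ z, z ∈ r.support ∧ r.edges.getLast? = some s(z, b) := by
  induction r with
  | nil => simp at hr
  | @cons a x b h p ih =>
    cases p with
    | nil => exact ⟨a, by simp, by simp⟩
    | @cons _ y _ h2 p2 =>
      obtain ⟨z, hz1, hz2⟩ := ih (by simp)
      refine ⟨z, ?_, ?_⟩
      · simp only [Walk.support_cons, List.mem_cons]
        have := hz1; simp only [Walk.support_cons, List.mem_cons] at this
        tauto
      rw [Walk.edges_cons, Walk.edges_cons, List.getLast?_cons_cons, ← Walk.edges_cons h2]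
      exact hz2

/-- Any neighbor (in the tree-edge graph) of a vertex `u` whose distance is not larger
must be the parent of `u`. -/
lemma tree_adj_max {G : SimpleGraph V} {v : V} {t : ℕ} {u z : V}
    (h : (SimpleGraph.fromEdgeSet (treeEdges G v t)).Adj u z)
    (hd : G.dist v z ≤ G.dist v u) :
    z = par G v u ∧ u ∈ ball G v t ∧ u ≠ v := by
  rw [fromEdgeSet_adj] at h
  obtain ⟨⟨w, hwB, hwv, he⟩, hne⟩ := h.imp_left id
  rcases Sym2.eq_iff.mp he with ⟨h1, h2⟩ | ⟨h1, h2⟩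
  · -- u = par w, z = w : impossible since dist z = dist u + 1
    exfalso
    obtain ⟨-, hdw⟩ := par_spec hwB.1 hwv
    rw [h1, h2] at hd
    omega
  · exact ⟨by rw [h2, h1], by rwa [h1], by rw [h1]; exact hwv⟩

lemma isAcyclic_treeGraph (G : SimpleGraph V) (v : V) (t : ℕ) :
    (SimpleGraph.fromEdgeSet (treeEdges G v t)).IsAcyclic := by
  set F := SimpleGraph.fromEdgeSet (treeEdges G v t) with hF
  classical
  intro x c hc
  -- pick a support vertex of maximal distance from v
  have hxs : x ∈ c.support.toFinset := by simp [Walk.start_mem_support]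
  obtain ⟨u, hu, hmax⟩ := Finset.exists_max_image c.support.toFinset (G.dist v) ⟨x, hxs⟩
  have hu' : u ∈ c.support := List.mem_toFinset.mp hu
  set c' := c.rotate u hu' with hc'def
  have hcyc : c'.IsCycle := hc.rotate hu'
  have hsub : ∀ y ∈ c'.support, G.dist v y ≤ G.dist v u := by
    intro y hy
    rw [Walk.support_eq_cons] at hy
    rcases List.mem_cons.mp hy with rfl | hy
    · exact le_rfl
    · have := (Walk.support_rotate c u hu').mem_iff.mp hy
      refine hmax y (List.mem_toFinset.mpr ?_)
      rw [Walk.support_eq_cons]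
      exact List.mem_cons_of_mem _ this
  clear_value c'
  -- first edge
  cases c' with
  | nil => exact hcyc.ne_nil rfl
  | @cons _ z1 _ hadj q =>
    have hz1 : z1 = par G v u :=
      (tree_adj_max hadj (hsub z1 (by simp))).1
    -- last edge
    have hne : (Walk.cons hadj q).edges ≠ [] := by simp
    obtain ⟨z2, hz2s, hz2e⟩ := exists_last_edge _ hne
    have hz2adj : F.Adj u z2 := by
      have : s(z2, u) ∈ (Walk.cons hadj q).edges := List.mem_of_mem_getLast? (by rw [hz2e]; rfl)
      exact ((Walk.edges_subset_edgeSet _ this)).symm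
    have hz2 : z2 = par G v u := (tree_adj_max hz2adj (hsub z2 hz2s)).1
    -- first edge equals last edge
    have hlast : (Walk.cons hadj q).edges.getLast? = some s(u, z1) := by
      rw [hz2e, hz1, hz2, Sym2.eq_swap]
    have hlen : 3 ≤ (Walk.cons hadj q).length := hcyc.three_le_length
    have hnodup : (Walk.cons hadj q).edges.Nodup := hcyc.edges_nodup
    rw [Walk.edges_cons] at hlast hnodup
    have hqne : q.edges ≠ [] := by
      intro h
      have := Walk.length_edges q
      rw [h] at this
      simp only [Walk.length_cons] at hlen
      simp at this
      omega
    have hmem : s(u, z1) ∈ q.edges := by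
      cases hq : q.edges with
      | nil => exact absurd hq hqne
      | cons e l =>
        rw [hq, List.getLast?_cons_cons] at hlast
        exact List.mem_of_mem_getLast? (l := e :: l) (by rw [hlast]; rfl)
    exact (List.nodup_cons.mp hnodup).1 hmem

end MC17

namespace MC17
variable {V : Type*}

lemma ball_adj {G : SimpleGraph V} {v : V} {t : ℕ} {a b : V} :
    (ballGraph G v t).Adj a b ↔ G.Adj a b ∧ a ∈ ball G v t ∧ b ∈ ball G v t := Iff.rfl

/-- The non-tree edges of the ball graph. -/
def NT (G : SimpleGraph V) (v : V) (t : ℕ) : Set (Sym2 V) :=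
  (ballGraph G v t).edgeSet \ treeEdges G v t

lemma mem_ball_of_mem_edgeSet {G : SimpleGraph V} {v : V} {t : ℕ} {e : Sym2 V}
    (he : e ∈ (ballGraph G v t).edgeSet) {x : V} (hx : x ∈ e) : x ∈ ball G v t := by
  induction e with
  | _ a b =>
    rw [mem_edgeSet, ball_adj] at he
    rcases Sym2.mem_iff.mp hx with rfl | rfl
    · exact he.2.1
    · exact he.2.2

/-- First step from `v` on the tree path to `x`. -/
noncomputable def fs (G : SimpleGraph V) (v : V) (x : V) : V :=
  (par G v)^[G.dist v x - 1] x

lemma fs_spec {G : SimpleGraph V} {v : V} {t : ℕ} {x : V} (hx : x ∈ ball G v t)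
    (hxv : x ≠ v) :
    fs G v x ∈ ball G v t ∧ G.dist v (fs G v x) = 1 ∧ G.Adj v (fs G v x) := by
  have hd : 1 ≤ G.dist v x := hx.1.pos_dist_of_ne (Ne.symm hxv)
  obtain ⟨hb, hdd⟩ := par_iter hx (G.dist v x - 1) (by omega)
  rw [← fs] at hb hdd
  have h1 : G.dist v (fs G v x) = 1 := by omega
  have hfsv : fs G v x ≠ v := by
    intro h
    rw [h, SimpleGraph.dist_self] at h1
    omega
  obtain ⟨hadj, hdp⟩ := par_spec hb.1 hfsv
  have : par G v (fs G v x) = v :=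
    eq_of_dist_eq_zero (par_mem_ball hb hfsv).1 (by omega)
  rw [this] at hadj
  exact ⟨hb, h1, hadj⟩

lemma fs_par {G : SimpleGraph V} {v : V} {t : ℕ} {x : V} (hx : x ∈ ball G v t)
    (h2 : 2 ≤ G.dist v x) : fs G v x = fs G v (par G v x) := by
  have hxv : x ≠ v := by
    intro h; rw [h, SimpleGraph.dist_self] at h2; omega
  obtain ⟨-, hdp⟩ := par_spec hx.1 hxv
  have h1 : G.dist v x - 1 = (G.dist v x - 2) + 1 := by omega
  rw [fs, fs, h1, Function.iterate_succ_apply]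
  congr 1
  omega

open Classical in
/-- The edge to delete corresponding to an endpoint `x` of a non-tree edge `e`. -/
noncomputable def epe (G : SimpleGraph V) (v : V) (e : Sym2 V) (x : V) : Sym2 V :=
  if x = v then e else s(v, fs G v x)

/-- The set of vertices still safely connected to `v` after deleting `D'`. -/
def Good (G : SimpleGraph V) (v : V) (t : ℕ) (D' : Set (Sym2 V)) : Set V :=
  {u | u ∈ ball G v t ∧ (u = v ∨ s(v, fs G v u) ∉ D')}

lemma good_step {G : SimpleGraph V} {v : V} {t : ℕ} {D' : Set (Sym2 V)}
    (hD' : ∀ e ∈ NT G v t, ∀ x, x ∈ e → epe G v e x ∈ D')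
    {a b : V} (ha : a ∈ Good G v t D')
    (hab : ((ballGraph G v t).deleteEdges D').Adj a b) :
    b ∈ Good G v t D' ∧ s(a, b) ∈ treeEdges G v t := by
  rw [SimpleGraph.deleteEdges_adj] at hab
  obtain ⟨hball, hnotD⟩ := hab
  obtain ⟨hGab, haB, hbB⟩ := ball_adj.mp hball
  by_cases htree : s(a, b) ∈ treeEdges G v t
  · refine ⟨?_, htree⟩
    obtain ⟨w, hwB, hwv, he⟩ := htree
    rcases Sym2.eq_iff.mp he with ⟨h1, h2⟩ | ⟨h1, h2⟩
    · -- a = par w, b = w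
      subst h2
      obtain ⟨-, hdp⟩ := par_spec hbB.1 hwv
      rw [← h1] at hdp
      refine ⟨hbB, Or.inr ?_⟩
      rcases Nat.lt_or_ge (G.dist v b) 2 with hlt | hge
      · -- dist v b = 1, a = v
        have hd1 : G.dist v b = 1 := by
          have := hbB.1.pos_dist_of_ne (Ne.symm hwv); omega
        have hav : a = v := eq_of_dist_eq_zero haB.1 (by omega)
        have : fs G v b = b := by rw [fs, hd1]; simp
        rw [this, ← hav]
        exact hnotD
      · have hfs : fs G v b = fs G v a := by
          rw [fs_par hbB hge, h1]
        rw [hfs]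
        have hanv : a ≠ v := by
          intro h
          rw [h, SimpleGraph.dist_self] at hdp
          omega
        rcases ha.2 with h | h
        · exact absurd h hanv
        · exact h
    · -- a = w, b = par w
      subst h1
      obtain ⟨-, hdp⟩ := par_spec haB.1 hwv
      rw [← h2] at hdp
      by_cases hbv : b = v
      · exact ⟨hbB, Or.inl hbv⟩
      · refine ⟨hbB, Or.inr ?_⟩
        have hge : 2 ≤ G.dist v a := by
          have := hbB.1.pos_dist_of_ne (Ne.symm hbv)
          omega
        have hfs : fs G v a = fs G v b := by rw [fs_par haB hge, h2]
        rw [← hfs]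
        rcases ha.2 with h | h
        · exact absurd h hwv
        · exact h
  · exfalso
    have heNT : s(a, b) ∈ NT G v t := ⟨(mem_edgeSet _).mpr hball, htree⟩
    have hepe := hD' _ heNT a (Sym2.mem_mk_left a b)
    by_cases hav : a = v
    · rw [epe, if_pos hav] at hepe
      exact hnotD hepe
    · rw [epe, if_neg hav] at hepe
      rcases ha.2 with h | h
      · exact hav h
      · exact h hepe

lemma good_walk {G : SimpleGraph V} {v : V} {t : ℕ} {D' : Set (Sym2 V)}
    (hD' : ∀ e ∈ NT G v t, ∀ x, x ∈ e → epe G v e x ∈ D') :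
    ∀ {a b : V} (q : ((ballGraph G v t).deleteEdges D').Walk a b),
      a ∈ Good G v t D' →
      b ∈ Good G v t D' ∧ ∀ e ∈ q.edges, e ∈ treeEdges G v t := by
  intro a b q
  induction q with
  | nil => exact fun h => ⟨h, by simp⟩
  | @cons a x b h q ih =>
    intro ha
    obtain ⟨hx, he⟩ := good_step hD' ha h
    obtain ⟨hb, hq⟩ := ih hx
    refine ⟨hb, ?_⟩
    intro e hee
    rw [Walk.edges_cons] at hee
    rcases List.mem_cons.mp hee with rfl | hee
    · exact he
    · exact hq e hee


lemma sym2_mem_finite (e : Sym2 V) : {y : V | y ∈ e}.Finite := by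
  induction e with
  | _ a b =>
    have : {y : V | y ∈ s(a, b)} = {a, b} := Set.ext fun y => Sym2.mem_iff
    rw [this]
    exact (Set.finite_singleton b).insert a

section Multicycle

variable (G : SimpleGraph V) (v : V) (t : ℕ) (F : Finset (Sym2 V))

/-- The vertex set of the multicycle: union of tree paths to endpoints of edges in `F`. -/
def Wset : Set V :=
  ⋃ e ∈ (F : Set (Sym2 V)), ⋃ x ∈ {y : V | y ∈ e},
    (fun j => (par G v)^[j] x) '' Set.Iic (G.dist v x)

lemma mem_Wset {u : V} : u ∈ Wset G v F ↔
    ∃ e ∈ F, ∃ x, x ∈ e ∧ ∃ j ≤ G.dist v x, (par G v)^[j] x = u := by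
  simp [Wset, Set.mem_iUnion]

lemma Wset_finite : (Wset G v F).Finite :=
  Set.Finite.biUnion F.finite_toSet fun e _ =>
    Set.Finite.biUnion (sym2_mem_finite e) fun x _ => (Set.finite_Iic _).image _

variable {G v t F}

lemma Wset_subset_ball (hF : ↑F ⊆ NT G v t) : Wset G v F ⊆ ball G v t := by
  intro u hu
  obtain ⟨e, heF, x, hxe, j, hj, rfl⟩ := (mem_Wset G v F).mp hu
  have hx : x ∈ ball G v t := mem_ball_of_mem_edgeSet (hF heF).1 hxe
  exact (par_iter hx j hj).1

lemma Wset_par (hF : ↑F ⊆ NT G v t) {u : V} (hu : u ∈ Wset G v F) (hv : u ≠ v) :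
    par G v u ∈ Wset G v F := by
  obtain ⟨e, heF, x, hxe, j, hj, rfl⟩ := (mem_Wset G v F).mp hu
  have hx : x ∈ ball G v t := mem_ball_of_mem_edgeSet (hF heF).1 hxe
  have hjlt : j < G.dist v x := by
    rcases Nat.lt_or_ge j (G.dist v x) with h | h
    · exact h
    · exfalso
      have : j = G.dist v x := le_antisymm hj h
      rw [this, par_iter_dist_eq_zero hx] at hv
      exact hv rfl
  exact (mem_Wset G v F).mpr ⟨e, heF, x, hxe, j + 1, by omega,
    by rw [Function.iterate_succ_apply']⟩

lemma v_mem_Wset (hF : ↑F ⊆ NT G v t) (hne : F.Nonempty) : v ∈ Wset G v F := by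
  obtain ⟨e, he⟩ := hne
  induction e with
  | _ a b =>
    have ha : a ∈ ball G v t := mem_ball_of_mem_edgeSet (hF he).1 (Sym2.mem_mk_left a b)
    exact (mem_Wset G v F).mpr ⟨s(a, b), he, a, Sym2.mem_mk_left a b, G.dist v a, le_rfl,
      par_iter_dist_eq_zero ha⟩

lemma endpoint_mem_Wset (hF : ↑F ⊆ NT G v t) {e : Sym2 V} (he : e ∈ F) {x : V}
    (hx : x ∈ e) : x ∈ Wset G v F :=
  (mem_Wset G v F).mpr ⟨e, he, x, hx, 0, Nat.zero_le _, rfl⟩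

variable (G v t F)

/-- The tree part of the multicycle. -/
def Tsub : G.Subgraph where
  verts := Wset G v F
  Adj a b :=
    (a ∈ Wset G v F ∧ b ∈ Wset G v F ∧ b ∈ ball G v t ∧ b ≠ v ∧ a = par G v b) ∨
    (b ∈ Wset G v F ∧ a ∈ Wset G v F ∧ a ∈ ball G v t ∧ a ≠ v ∧ b = par G v a)
  adj_sub := by
    rintro a b (⟨-, -, hb, hbv, rfl⟩ | ⟨-, -, ha, hav, rfl⟩)
    · exact (par_spec hb.1 hbv).1
    · exact ((par_spec ha.1 hav).1).symm
  edge_vert := by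
    rintro a b (⟨h, -⟩ | ⟨-, h, -⟩) <;> exact h
  symm := by
    constructor
    rintro a b (h | h)
    · exact Or.inr h
    · exact Or.inl h

/-- The full multicycle subgraph. -/
def Gsub : G.Subgraph where
  verts := Wset G v F
  Adj a b := (Tsub G v t F).Adj a b ∨
    (s(a, b) ∈ F ∧ G.Adj a b ∧ a ∈ Wset G v F ∧ b ∈ Wset G v F)
  adj_sub := by
    rintro a b (h | h)
    · exact (Tsub G v t F).adj_sub h
    · exact h.2.1
  edge_vert := by
    rintro a b (h | h)
    · exact (Tsub G v t F).edge_vert h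
    · exact h.2.2.1
  symm := by
    constructor
    rintro a b (h | ⟨h1, h2, h3, h4⟩)
    · exact Or.inl ((Tsub G v t F).adj_symm h)
    · exact Or.inr ⟨Sym2.eq_swap ▸ h1, h2.symm, h4, h3⟩

lemma Tsub_le_Gsub : Tsub G v t F ≤ Gsub G v t F :=
  ⟨subset_rfl, fun _ _ h => Or.inl h⟩

variable {G v t F}

lemma Tsub_adj_treeEdges {a b : V} (h : (Tsub G v t F).Adj a b) :
    s(a, b) ∈ treeEdges G v t := by
  rcases h with ⟨-, -, hb, hbv, rfl⟩ | ⟨-, -, ha, hav, rfl⟩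
  · exact ⟨b, hb, hbv, rfl⟩
  · exact ⟨a, ha, hav, Sym2.eq_swap⟩

lemma Tsub_walk (hF : ↑F ⊆ NT G v t) (hne : F.Nonempty) :
    ∀ (n : ℕ) (u : V) (hu : u ∈ Wset G v F), G.dist v u ≤ n →
      ∃ q : (Tsub G v t F).coe.Walk ⟨u, hu⟩ ⟨v, v_mem_Wset hF hne⟩,
        q.length = G.dist v u := by
  intro n
  induction n with
  | zero =>
    intro u hu hd
    have huB : u ∈ ball G v t := Wset_subset_ball hF hu
    have huv : u = v := eq_of_dist_eq_zero huB.1 (by omega)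
    subst huv
    exact ⟨Walk.nil, by rw [Walk.length_nil, SimpleGraph.dist_self]⟩
  | succ n ih =>
    intro u hu hd
    by_cases huv : u = v
    · subst huv
      exact ⟨Walk.nil, by rw [Walk.length_nil, SimpleGraph.dist_self]⟩
    · have huB : u ∈ ball G v t := Wset_subset_ball hF hu
      have hpW : par G v u ∈ Wset G v F := Wset_par hF hu huv
      obtain ⟨-, hdp⟩ := par_spec huB.1 huv
      have hadj : (Tsub G v t F).coe.Adj ⟨u, hu⟩ ⟨par G v u, hpW⟩ :=
        Or.inr ⟨hpW, hu, huB, huv, rfl⟩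
      obtain ⟨q, hq⟩ := ih (par G v u) hpW (by omega)
      exact ⟨Walk.cons hadj q, by rw [Walk.length_cons, hq]; omega⟩

lemma Tsub_connected (hF : ↑F ⊆ NT G v t) (hne : F.Nonempty) :
    (Tsub G v t F).coe.Connected := by
  rw [connected_iff]
  constructor
  · intro a b
    obtain ⟨a1, ha1⟩ := a
    obtain ⟨b1, hb1⟩ := b
    obtain ⟨qa, -⟩ := Tsub_walk hF hne (G.dist v a1) a1 ha1 le_rfl
    obtain ⟨qb, -⟩ := Tsub_walk hF hne (G.dist v b1) b1 hb1 le_rfl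
    exact (Walk.reachable qa).trans (Walk.reachable qb).symm
  · exact ⟨⟨v, v_mem_Wset hF hne⟩⟩

lemma Tsub_acyclic : (Tsub G v t F).coe.IsAcyclic := by
  intro x c hc
  have hc2 : (c.map (Tsub G v t F).hom).IsCycle :=
    (Walk.map_isCycle_iff_of_injective Subgraph.hom_injective).mpr hc
  have hsub : ∀ e ∈ (c.map (Tsub G v t F).hom).edges,
      e ∈ (SimpleGraph.fromEdgeSet (treeEdges G v t)).edgeSet := by
    intro e he
    rw [edgeSet_fromEdgeSet]
    refine ⟨?_, SimpleGraph.not_isDiag_of_mem_edgeSet G (Walk.edges_subset_edgeSet _ he)⟩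
    rw [Walk.edges_map] at he
    obtain ⟨e', he', rfl⟩ := List.mem_map.mp he
    have hadj := Walk.edges_subset_edgeSet c he'
    induction e' with
    | _ x1 x2 =>
      have : (Tsub G v t F).Adj x1.1 x2.1 := ((Tsub G v t F).coe.mem_edgeSet).mp hadj
      exact Tsub_adj_treeEdges this
  exact isAcyclic_treeGraph G v t _ (hc2.transfer hsub)

lemma Tsub_isTree (hF : ↑F ⊆ NT G v t) (hne : F.Nonempty) :
    (Tsub G v t F).coe.IsTree :=
  ⟨Tsub_connected hF hne, Tsub_acyclic⟩

lemma Gsub_connected (hF : ↑F ⊆ NT G v t) (hne : F.Nonempty) :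
    (Gsub G v t F).coe.Connected := by
  have hle : (Tsub G v t F).coe ≤ (Gsub G v t F).coe := fun a b h => Or.inl h
  rw [connected_iff]
  constructor
  · intro a b
    have h := (Tsub_connected hF hne).preconnected a b
    exact h.mono hle
  · exact ⟨⟨v, v_mem_Wset hF hne⟩⟩

lemma Tsub_edgeSet (hF : ↑F ⊆ NT G v t) :
    (Tsub G v t F).edgeSet = (fun u => s(par G v u, u)) '' (Wset G v F \ {v}) := by
  ext e
  induction e with
  | _ a b =>
    constructor
    · intro h
      rw [Subgraph.mem_edgeSet] at h
      rcases h with ⟨-, hbW, -, hbv, rfl⟩ | ⟨-, haW, -, hav, rfl⟩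
      · exact ⟨b, ⟨hbW, hbv⟩, rfl⟩
      · exact ⟨a, ⟨haW, hav⟩, Sym2.eq_swap⟩
    · rintro ⟨u, ⟨huW, huv⟩, he⟩
      have he' : s(par G v u, u) = s(a, b) := he
      rw [Subgraph.mem_edgeSet]
      rcases Sym2.eq_iff.mp he' with ⟨h1, h2⟩ | ⟨h1, h2⟩
      · rw [← h1, ← h2]
        exact Or.inl ⟨Wset_par hF huW huv, huW, Wset_subset_ball hF huW, huv, rfl⟩
      · rw [← h1, ← h2]
        exact Or.inr ⟨Wset_par hF huW huv, huW, Wset_subset_ball hF huW, huv, rfl⟩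

lemma Tsub_edgeSet_ncard (hF : ↑F ⊆ NT G v t) (hne : F.Nonempty) :
    (Tsub G v t F).edgeSet.ncard = (Wset G v F).ncard - 1 := by
  rw [Tsub_edgeSet hF]
  have hinj : Set.InjOn (fun u => s(par G v u, u)) (Wset G v F \ {v}) := by
    intro u1 h1 u2 h2 heq
    rcases Sym2.eq_iff.mp heq with ⟨-, h⟩ | ⟨ha, hb⟩
    · exact h
    · exfalso
      have hu1B : u1 ∈ ball G v t := Wset_subset_ball hF h1.1
      have hu2B : u2 ∈ ball G v t := Wset_subset_ball hF h2.1
      obtain ⟨-, hd1⟩ := par_spec hu1B.1 h1.2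
      obtain ⟨-, hd2⟩ := par_spec hu2B.1 h2.2
      rw [ha] at hd1
      rw [← hb] at hd2
      omega
  rw [Set.ncard_image_of_injOn hinj,
    Set.ncard_diff_singleton_of_mem (v_mem_Wset hF hne)]

lemma Gsub_edgeSet (hF : ↑F ⊆ NT G v t) :
    (Gsub G v t F).edgeSet = (Tsub G v t F).edgeSet ∪ ↑F := by
  ext e
  induction e with
  | _ a b =>
    constructor
    · intro h
      rw [Subgraph.mem_edgeSet] at h
      rcases h with h | h
      · exact Or.inl (Subgraph.mem_edgeSet.mpr h)
      · exact Or.inr h.1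
    · intro h
      rw [Subgraph.mem_edgeSet]
      rcases h with h | h
      · exact Or.inl (Subgraph.mem_edgeSet.mp h)
      · refine Or.inr ⟨h, ?_, endpoint_mem_Wset hF h (Sym2.mem_mk_left a b),
          endpoint_mem_Wset hF h (Sym2.mem_mk_right a b)⟩
        have := (hF h).1
        rw [mem_edgeSet] at this
        exact this.1

lemma Gsub_count (hF : ↑F ⊆ NT G v t) (hne : F.Nonempty) :
    (Gsub G v t F).edgeSet.ncard + 1 = (Wset G v F).ncard + F.card := by
  have hTfin : (Tsub G v t F).edgeSet.Finite := by
    rw [Tsub_edgeSet hF]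
    exact ((Wset_finite G v F).diff).image _
  have hdisj : Disjoint (Tsub G v t F).edgeSet (↑F : Set (Sym2 V)) := by
    rw [Set.disjoint_left]
    intro e he heF
    have h1 : e ∈ treeEdges G v t := by
      induction e with
      | _ a b => exact Tsub_adj_treeEdges (Subgraph.mem_edgeSet.mp he)
    exact (hF heF).2 h1
  rw [Gsub_edgeSet hF, Set.ncard_union_eq hdisj hTfin F.finite_toSet,
    Tsub_edgeSet_ncard hF hne, Set.ncard_coe_finset]
  have hpos : 0 < (Wset G v F).ncard :=
    (Set.ncard_pos (Wset_finite G v F)).mpr ⟨v, v_mem_Wset hF hne⟩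
  omega

lemma subgraph_dist_ge {H : G.Subgraph} {a b : V} (ha : a ∈ H.verts) (hb : b ∈ H.verts)
    (h : H.coe.Reachable ⟨a, ha⟩ ⟨b, hb⟩) :
    G.dist a b ≤ H.coe.dist ⟨a, ha⟩ ⟨b, hb⟩ := by
  obtain ⟨q, hq⟩ := h.exists_walk_length_eq_dist
  have := SimpleGraph.dist_le (q.map H.hom)
  rwa [Walk.length_map, hq] at this

lemma dists_eq (hF : ↑F ⊆ NT G v t) (hne : F.Nonempty) {w : V} (hw : w ∈ Wset G v F) :
    (Tsub G v t F).coe.dist ⟨v, v_mem_Wset hF hne⟩ ⟨w, hw⟩ = G.dist v w ∧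
    (Gsub G v t F).coe.dist ⟨v, v_mem_Wset hF hne⟩ ⟨w, hw⟩ = G.dist v w := by
  obtain ⟨q, hq⟩ := Tsub_walk hF hne (G.dist v w) w hw le_rfl
  have hle : (Tsub G v t F).coe ≤ (Gsub G v t F).coe := fun a b h => Or.inl h
  have hT1 : (Tsub G v t F).coe.dist ⟨v, v_mem_Wset hF hne⟩ ⟨w, hw⟩ ≤ G.dist v w := by
    rw [SimpleGraph.dist_comm]
    calc (Tsub G v t F).coe.dist ⟨w, hw⟩ ⟨v, v_mem_Wset hF hne⟩ ≤ q.length :=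
        SimpleGraph.dist_le q
      _ = G.dist v w := hq
  have hG1 : (Gsub G v t F).coe.dist ⟨v, v_mem_Wset hF hne⟩ ⟨w, hw⟩ ≤ G.dist v w := by
    rw [SimpleGraph.dist_comm]
    calc (Gsub G v t F).coe.dist ⟨w, hw⟩ ⟨v, v_mem_Wset hF hne⟩
        ≤ (q.map (Hom.ofLE hle)).length := SimpleGraph.dist_le _
      _ = G.dist v w := (Walk.length_map _ q).trans hq
  have hT2 := subgraph_dist_ge (H := Tsub G v t F) (v_mem_Wset hF hne) hw
    (Walk.reachable q).symm
  have hG2 := subgraph_dist_ge (H := Gsub G v t F) (v_mem_Wset hF hne) hw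
    ⟨(q.map (Hom.ofLE hle)).reverse⟩
  omega

lemma leaf_lemma (hF : ↑F ⊆ NT G v t) {w : V} (hw : w ∈ Wset G v F) (hwv : w ≠ v)
    (hleaf : ((Tsub G v t F).neighborSet w).ncard = 1) :
    ∃ y, (Gsub G v t F).Adj w y ∧ ¬ (Tsub G v t F).Adj w y := by
  have hwB : w ∈ ball G v t := Wset_subset_ball hF hw
  have hNfin : ((Tsub G v t F).neighborSet w).Finite := by
    apply (Wset_finite G v F).subset
    intro y hy
    exact (Tsub G v t F).edge_vert ((Tsub G v t F).adj_symm hy)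
  have hnochild : ∀ u, u ∈ Wset G v F → u ≠ v → par G v u = w → False := by
    intro u hu huv hpu
    have h1 : par G v w ∈ (Tsub G v t F).neighborSet w :=
      Or.inr ⟨Wset_par hF hw hwv, hw, hwB, hwv, rfl⟩
    have h2 : u ∈ (Tsub G v t F).neighborSet w :=
      Or.inl ⟨hw, hu, Wset_subset_ball hF hu, huv, hpu.symm⟩
    have hne2 : par G v w ≠ u := by
      intro h
      obtain ⟨-, hd1⟩ := par_spec hwB.1 hwv
      obtain ⟨-, hd2⟩ := par_spec (Wset_subset_ball hF hu).1 huv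
      rw [hpu] at hd2
      rw [h] at hd1
      omega
    have : 1 < ((Tsub G v t F).neighborSet w).ncard :=
      (Set.one_lt_ncard_iff hNfin).mpr ⟨par G v w, u, h1, h2, hne2⟩
    omega
  obtain ⟨e, heF, x, hxe, j, hj, hwx⟩ := (mem_Wset G v F).mp hw
  have hxB : x ∈ ball G v t := mem_ball_of_mem_edgeSet (hF heF).1 hxe
  have hj0 : j = 0 := by
    by_contra h0
    have hu : (par G v)^[j - 1] x ∈ Wset G v F :=
      (mem_Wset G v F).mpr ⟨e, heF, x, hxe, j - 1, by omega, rfl⟩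
    obtain ⟨-, hdu⟩ := par_iter hxB (j - 1) (by omega)
    have huv : (par G v)^[j - 1] x ≠ v := by
      intro h
      rw [h, SimpleGraph.dist_self] at hdu
      omega
    have hpu : par G v ((par G v)^[j - 1] x) = w := by
      rw [← hwx]
      have hj1 : j = (j - 1) + 1 := by omega
      rw [hj1, Function.iterate_succ_apply']
      norm_num
    exact hnochild _ hu huv hpu
  rw [hj0, Function.iterate_zero_apply] at hwx
  subst hwx
  refine ⟨Sym2.Mem.other hxe, ?_, ?_⟩
  · have hey : s(x, Sym2.Mem.other hxe) = e := Sym2.other_spec hxe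
    have hGadj : G.Adj x (Sym2.Mem.other hxe) := by
      have h1 := (hF heF).1
      rw [← hey, mem_edgeSet] at h1
      exact h1.1
    exact Or.inr ⟨by rw [hey]; exact heF, hGadj, hw, endpoint_mem_Wset hF heF (Sym2.other_mem hxe)⟩
  · intro hT
    have h1 : s(x, Sym2.Mem.other hxe) ∈ treeEdges G v t := Tsub_adj_treeEdges hT
    rw [Sym2.other_spec hxe] at h1
    exact (hF heF).2 h1

lemma multicycle_of_subset (hF : ↑F ⊆ NT G v t) (hne : F.Nonempty) :
    HasMulticycle G F.card t v := by
  refine ⟨Gsub G v t F, Tsub G v t F, v_mem_Wset hF hne, v_mem_Wset hF hne,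
    Tsub_le_Gsub G v t F, rfl, Wset_finite G v F, Gsub_connected hF hne,
    Tsub_isTree hF hne, Gsub_count hF hne, ?_, ?_⟩
  · intro w hw hw'
    obtain ⟨h1, h2⟩ := dists_eq hF hne hw
    refine ⟨by rw [h1, h2], ?_⟩
    rw [h1]
    exact (Wset_subset_ball hF hw).2
  · intro w hw hwv hleaf
    exact leaf_lemma hF hw hwv hleaf

end Multicycle


lemma NT_small (G : SimpleGraph V) (v : V) (t k : ℕ)
    (hno : ∀ k' : ℕ, k < k' → ∀ s : V, ¬ HasMulticycle G k' t s) :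
    (NT G v t).Finite ∧ (NT G v t).ncard ≤ k := by
  have hcard : ∀ Fs : Finset (Sym2 V), ↑Fs ⊆ NT G v t → Fs.card ≤ k := by
    intro Fs hFs
    by_contra h
    push_neg at h
    have hne : Fs.Nonempty := Finset.card_pos.mp (by omega)
    exact hno Fs.card h v (multicycle_of_subset hFs hne)
  have hfin : (NT G v t).Finite := by
    by_contra hinf
    obtain ⟨s, hs, hsfin, hscard⟩ := Set.Infinite.exists_subset_ncard_eq hinf (k + 1)
    have h1 : ↑hsfin.toFinset ⊆ NT G v t := by
      rw [Set.Finite.coe_toFinset]; exact hs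
    have h2 := hcard hsfin.toFinset h1
    rw [← Set.ncard_eq_toFinset_card _ hsfin, hscard] at h2
    omega
  refine ⟨hfin, ?_⟩
  have h1 : ↑hfin.toFinset ⊆ NT G v t := by
    rw [Set.Finite.coe_toFinset]
  have h2 := hcard hfin.toFinset h1
  rwa [← Set.ncard_eq_toFinset_card _ hfin] at h2

end MC17

open MC17 in
/-- If `G` contains no `(k',t)`-multicycle for any `k' > k`,
then for every vertex `v` one can remove at most `2k` edges incident to `v`
from the subgraph `H` induced by the ball of radius `t` around `v` so that the
connected component of `v` in the resulting graph is a tree (contains no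
cycle). -/
theorem multicycle_free_ball_almost_tree {V : Type*} (G : SimpleGraph V)
    (k t : ℕ) (hno : ∀ k' : ℕ, k < k' → ∀ s : V, ¬ HasMulticycle G k' t s)
    (v : V) :
    ∃ D : Finset (Sym2 V), D.card ≤ 2 * k ∧
      (∀ e ∈ D, v ∈ e ∧ e ∈ (ballGraph G v t).edgeSet) ∧
      ∀ w : V, ((ballGraph G v t).deleteEdges (D : Set (Sym2 V))).Reachable v w →
        ∀ p : ((ballGraph G v t).deleteEdges (D : Set (Sym2 V))).Walk w w,
          ¬ p.IsCycle := by
  classical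
  obtain ⟨hfin, hcard⟩ := NT_small G v t k hno
  set N := hfin.toFinset with hN
  set D := N.biUnion (fun e => ((sym2_mem_finite e).toFinset.image (epe G v e))) with hD
  refine ⟨D, ?_, ?_, ?_⟩
  · -- cardinality
    rw [hD]
    calc (N.biUnion (fun e => ((sym2_mem_finite e).toFinset.image (epe G v e)))).card
        ≤ ∑ e ∈ N, ((sym2_mem_finite e).toFinset.image (epe G v e)).card :=
          Finset.card_biUnion_le
      _ ≤ N.card * 2 := by
          apply Finset.sum_le_card_nsmul
          intro e he
          calc ((sym2_mem_finite e).toFinset.image (epe G v e)).card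
              ≤ (sym2_mem_finite e).toFinset.card := Finset.card_image_le
            _ ≤ 2 := by
                induction e with
                | _ a b =>
                  have hsub : (sym2_mem_finite s(a, b)).toFinset ⊆ {a, b} := by
                    intro y hy
                    rw [Set.Finite.mem_toFinset] at hy
                    simp only [Finset.mem_insert, Finset.mem_singleton]
                    exact Sym2.mem_iff.mp hy
                  calc (sym2_mem_finite s(a, b)).toFinset.card ≤ ({a, b} : Finset V).card :=
                      Finset.card_le_card hsub
                    _ ≤ 2 := Finset.card_insert_le a {b} |>.trans (by simp)
      _ ≤ 2 * k := by
          rw [← Set.ncard_eq_toFinset_card _ hfin] at *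
          omega
  · -- edges incident to v and in the ball graph
    intro e he
    rw [hD] at he
    obtain ⟨e', he'N, he'⟩ := Finset.mem_biUnion.mp he
    obtain ⟨x, hx, rfl⟩ := Finset.mem_image.mp he'
    rw [Set.Finite.mem_toFinset] at hx
    have he'NT : e' ∈ NT G v t := by rwa [hN, Set.Finite.mem_toFinset] at he'N
    by_cases hxv : x = v
    · rw [epe, if_pos hxv]
      exact ⟨hxv ▸ hx, he'NT.1⟩
    · rw [epe, if_neg hxv]
      have hxB : x ∈ MC17.ball G v t := mem_ball_of_mem_edgeSet he'NT.1 hx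
      obtain ⟨hfsB, -, hfsadj⟩ := fs_spec hxB hxv
      refine ⟨Sym2.mem_mk_left v _, ?_⟩
      rw [mem_edgeSet]
      exact ⟨hfsadj, v_mem_ball G v t, hfsB⟩
  · -- no cycles in the component of v
    intro w hreach p hp
    have hD' : ∀ e ∈ NT G v t, ∀ x, x ∈ e → epe G v e x ∈ (↑D : Set (Sym2 V)) := by
      intro e he x hx
      rw [Finset.mem_coe, hD]
      exact Finset.mem_biUnion.mpr ⟨e, (Set.Finite.mem_toFinset hfin).mpr he,
        Finset.mem_image.mpr ⟨x, (Set.Finite.mem_toFinset _).mpr hx, rfl⟩⟩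
    have hvGood : v ∈ Good G v t ↑D := ⟨v_mem_ball G v t, Or.inl rfl⟩
    obtain ⟨q⟩ := hreach
    have hwGood : w ∈ Good G v t ↑D := (good_walk hD' q hvGood).1
    have htree : ∀ e ∈ p.edges, e ∈ treeEdges G v t := (good_walk hD' p hwGood).2
    have hsub : ∀ e ∈ p.edges, e ∈ (SimpleGraph.fromEdgeSet (treeEdges G v t)).edgeSet := by
      intro e he
      rw [edgeSet_fromEdgeSet]
      exact ⟨htree e he, SimpleGraph.not_isDiag_of_mem_edgeSet _
        (Walk.edges_subset_edgeSet p he)⟩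
    have hcyc2 := Walk.IsCycle.transfer (q := p) hp hsub
    exact isAcyclic_treeGraph G v t _ hcyc2
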